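/- Removing the complement-checking L-component from A_G yields a nondeterministic Büchi (index (1,2)) automaton recognizing G: the automaton with states g₁ (rank 1), g₂ (rank 2), ⊤₂ (rank 2), ⊥₁ (rank 1), transitions from g-states on a to (g₂,⊤₂) or (⊤₂,g₁) and on b to (⊥₁,⊥₁), accepts a tree iff it has a good branch. -/

import Mathlib

/-- Infinite binary trees over {a,b}; `true` = a, `false` = b. -/
abbrev Tree2 := List (Fin 2) → Bool

/-- The length-`n` prefix of a branch. -/
def pre (β : ℕ → Fin 2) (n : ℕ) : List (Fin 2) := List.ofFn (fun i : Fin n => β i)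

/-- A branch is good: all its finite prefixes are labelled `a` and it turns left (0)
infinitely often. -/
def Good (t : Tree2) (β : ℕ → Fin 2) : Prop :=
  (∀ n, t (pre β n) = true) ∧ (∀ m, ∃ n ≥ m, β n = 0)

/-- `β` is strictly to the left of `γ`. -/
def LeftOf (β γ : ℕ → Fin 2) : Prop :=
  ∃ n, (∀ i < n, β i = γ i) ∧ β n = 0 ∧ γ n = 1

/-- A branch passes through a node. -/
def Through (γ : ℕ → Fin 2) (v : List (Fin 2)) : Prop := pre γ v.length = v

/-- The set of trees that have a good branch. -/
def G : Set Tree2 := {t | ∃ β, Good t β}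

/-- `r` occurs infinitely often in the sequence `g`. -/
def InfOften (g : ℕ → ℕ) (r : ℕ) : Prop := ∀ m, ∃ n ≥ m, g n = r

/-- Parity condition: the maximal value occurring infinitely often is even. -/
def ParityOk (g : ℕ → ℕ) : Prop :=
  ∃ r, Even r ∧ InfOften g r ∧ ∀ r', InfOften g r' → r' ≤ r

/-- States of the Büchi automaton obtained from `A_G` by removing the L-component. -/
inductive QB | g1 | g2 | top2 | bot1
deriving DecidableEq

def rankB : QB → ℕ
  | .g1 => 1 | .g2 => 2 | .top2 => 2 | .bot1 => 1

/-- Transitions: from g-states on `a` to `(g₂, ⊤₂)` or `(⊤₂, g₁)`, on `b` to `(⊥₁, ⊥₁)`. -/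
def deltaB : QB → Bool → QB → QB → Prop := fun q a q1 q2 =>
  match q, a with
  | .g1, true | .g2, true => (q1 = .g2 ∧ q2 = .top2) ∨ (q1 = .top2 ∧ q2 = .g1)
  | .g1, false | .g2, false => q1 = .bot1 ∧ q2 = .bot1
  | .top2, _ => q1 = .top2 ∧ q2 = .top2
  | .bot1, _ => q1 = .bot1 ∧ q2 = .bot1

def IsRunB (t : Tree2) (q0 : QB) (ρ : List (Fin 2) → QB) : Prop :=
  ρ [] = q0 ∧ ∀ v : List (Fin 2), deltaB (ρ v) (t v) (ρ (v ++ [0])) (ρ (v ++ [1]))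

def AccRunB (t : Tree2) (q0 : QB) (ρ : List (Fin 2) → QB) : Prop :=
  IsRunB t q0 ρ ∧ ∀ β : ℕ → Fin 2, ParityOk (fun n => rankB (ρ (pre β n)))

/-! ### Auxiliary lemmas -/

lemma fin2cases (x : Fin 2) : x = 0 ∨ x = 1 := by fin_cases x <;> simp

lemma pre_length (β : ℕ → Fin 2) (n : ℕ) : (pre β n).length = n := by simp [pre]

lemma pre_zero (β : ℕ → Fin 2) : pre β 0 = [] := by simp [pre]

lemma pre_succ (β : ℕ → Fin 2) (n : ℕ) : pre β (n+1) = pre β n ++ [β n] := by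
  rw [pre, List.ofFn_succ']
  simp [pre, Fin.last]

lemma pre_take (β : ℕ → Fin 2) {m n : ℕ} (h : n ≤ m) : (pre β m).take n = pre β n := by
  induction m with
  | zero => simp at h; simp [h, pre]
  | succ k ih =>
    rcases Nat.lt_or_ge n (k+1) with h' | h'
    · rw [pre_succ, List.take_append_of_le_length (by simp [pre_length]; omega), ih (by omega)]
    · have : n = k+1 := by omega
      subst this
      simp [pre_length, List.take_of_length_le, le_refl]

lemma rankB_le_two (q : QB) : rankB q ≤ 2 := by cases q <;> simp [rankB]

/-- The run constructed from a good branch: g-states along the branch, ⊤₂ elsewhere. -/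
def runOf (β : ℕ → Fin 2) (v : List (Fin 2)) : QB :=
  if v = pre β v.length then
    if v.length = 0 then .g1 else if β (v.length - 1) = 0 then .g2 else .g1
  else .top2

lemma append_eq_pre_iff (β : ℕ → Fin 2) (v : List (Fin 2)) (x : Fin 2) :
    v ++ [x] = pre β (v.length + 1) ↔ (v = pre β v.length ∧ x = β v.length) := by
  rw [pre_succ]
  constructor
  · intro h
    have := List.append_inj h (by simp [pre_length])
    exact ⟨this.1, by simpa using this.2⟩
  · rintro ⟨h1, h2⟩
    exact congrArg₂ (· ++ ·) h1 (by rw [h2])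

/-- bot1 propagates to all descendants. -/
lemma bot_prop {t : Tree2} {ρ : List (Fin 2) → QB}
    (hδ : ∀ v : List (Fin 2), deltaB (ρ v) (t v) (ρ (v ++ [0])) (ρ (v ++ [1]))) :
    ∀ (u w : List (Fin 2)), ρ w = .bot1 → ρ (w ++ u) = .bot1 := by
  intro u
  induction u with
  | nil => intro w hw; simpa using hw
  | cons x u ih =>
    intro w hw
    have hd := hδ w
    rw [hw] at hd
    cases ht : t w <;> rw [ht] at hd <;> simp [deltaB] at hd
    all_goals {
      have h1 : ρ (w ++ [x]) = .bot1 := by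
        rcases fin2cases x with rfl | rfl
        · exact hd.1
        · exact hd.2
      have := ih (w ++ [x]) h1
      simpa using this }

lemma parity_no_tail_one {g : ℕ → ℕ} (N : ℕ) (h : ∀ n ≥ N, g n = 1) : ¬ ParityOk g := by
  rintro ⟨r, hre, hio, -⟩
  obtain ⟨n, hn, hgn⟩ := hio N
  rw [h n hn] at hgn
  subst hgn
  simp [Nat.even_iff] at hre

section Forward

variable {t : Tree2} {ρ : List (Fin 2) → QB}

/-- No reachable state can be bot1 in an accepting run. -/
lemma no_bot (hδ : ∀ v : List (Fin 2), deltaB (ρ v) (t v) (ρ (v ++ [0])) (ρ (v ++ [1])))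
    (hacc : ∀ β : ℕ → Fin 2, ParityOk (fun n => rankB (ρ (pre β n))))
    (w : List (Fin 2)) : ρ w ≠ .bot1 := by
  intro hw
  set γ : ℕ → Fin 2 := fun n => w.getD n 0 with hγ
  set L := w.length with hL
  have hpreL : pre γ L = w := by
    apply List.ext_getElem (by simp [pre_length, hL])
    intro i h1 h2
    have hiL : i < L := by simpa [pre_length] using h1
    simp [pre, hγ, List.getD_eq_getElem, hL]
    simp [List.getElem?_eq_getElem h2]
  have hext : ∀ k, ∃ u, pre γ (L + k) = w ++ u := by
    intro k
    induction k with
    | zero => exact ⟨[], by simp [hpreL]⟩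
    | succ j ih =>
      obtain ⟨u, hu⟩ := ih
      exact ⟨u ++ [γ (L + j)], by rw [show L + (j+1) = (L+j) + 1 by omega, pre_succ, hu,
        List.append_assoc]⟩
  have hbot : ∀ n ≥ L, ρ (pre γ n) = .bot1 := by
    intro n hn
    obtain ⟨u, hu⟩ := hext (n - L)
    rw [show L + (n - L) = n by omega] at hu
    rw [hu]
    exact bot_prop hδ u w hw
  exact parity_no_tail_one L (fun n hn => by simp [hbot n hn, rankB]) (hacc γ)

lemma g_true (hδ : ∀ v : List (Fin 2), deltaB (ρ v) (t v) (ρ (v ++ [0])) (ρ (v ++ [1])))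
    (hacc : ∀ β : ℕ → Fin 2, ParityOk (fun n => rankB (ρ (pre β n))))
    {v : List (Fin 2)} (hv : ρ v = .g1 ∨ ρ v = .g2) : t v = true := by
  by_contra h
  have ht : t v = false := by simpa using h
  have hd := hδ v
  rw [ht] at hd
  have hb : ρ (v ++ [0]) = .bot1 := by
    rcases hv with h' | h' <;> rw [h'] at hd <;> exact hd.1
  exact no_bot hδ hacc (v ++ [0]) hb

end Forward

/-- Direction choice along the g-branch. -/
def stepD (ρ : List (Fin 2) → QB) (v : List (Fin 2)) : Fin 2 :=
  if ρ (v ++ [0]) = .g2 then 0 else 1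

/-- The g-branch nodes. -/
def Vnode (ρ : List (Fin 2) → QB) : ℕ → List (Fin 2)
  | 0 => []
  | n+1 => Vnode ρ n ++ [stepD ρ (Vnode ρ n)]

lemma pre_Vnode (ρ : List (Fin 2) → QB) (n : ℕ) :
    pre (fun k => stepD ρ (Vnode ρ k)) n = Vnode ρ n := by
  induction n with
  | zero => simp [pre, Vnode]
  | succ k ih => rw [pre_succ, ih]; rfl

/-- The Büchi (index (1,2)) automaton recognizes `G`. -/
theorem Buchi_recognizes_G (t : Tree2) :
    (∃ ρ, AccRunB t QB.g1 ρ) ↔ t ∈ G := by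
  constructor
  · rintro ⟨ρ, ⟨⟨h0, hδ⟩, hacc⟩⟩
    set β : ℕ → Fin 2 := fun k => stepD ρ (Vnode ρ k) with hβ
    have stepCase : ∀ n, (ρ (Vnode ρ n) = .g1 ∨ ρ (Vnode ρ n) = .g2) →
        (ρ (Vnode ρ (n+1)) = .g2 ∧ stepD ρ (Vnode ρ n) = 0) ∨
        (ρ (Vnode ρ (n+1)) = .g1 ∧ stepD ρ (Vnode ρ n) = 1) := by
      intro n hn
      have ht : t (Vnode ρ n) = true := g_true hδ hacc hn
      have hd := hδ (Vnode ρ n)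
      rw [ht] at hd
      have hd' : (ρ (Vnode ρ n ++ [0]) = .g2 ∧ ρ (Vnode ρ n ++ [1]) = .top2) ∨
          (ρ (Vnode ρ n ++ [0]) = .top2 ∧ ρ (Vnode ρ n ++ [1]) = .g1) := by
        rcases hn with h' | h' <;> rw [h'] at hd <;> exact hd
      rcases hd' with ⟨h1, h2⟩ | ⟨h1, h2⟩
      · left
        have hs : stepD ρ (Vnode ρ n) = 0 := by simp [stepD, h1]
        refine ⟨?_, hs⟩
        show ρ (Vnode ρ n ++ [stepD ρ (Vnode ρ n)]) = .g2
        rw [hs]; exact h1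
      · right
        have hs : stepD ρ (Vnode ρ n) = 1 := by simp [stepD, h1]
        refine ⟨?_, hs⟩
        show ρ (Vnode ρ n ++ [stepD ρ (Vnode ρ n)]) = .g1
        rw [hs]; exact h2
    have inv : ∀ n, ρ (Vnode ρ n) = .g1 ∨ ρ (Vnode ρ n) = .g2 := by
      intro n
      induction n with
      | zero => left; exact h0
      | succ k ih =>
        rcases stepCase k ih with ⟨h1, _⟩ | ⟨h1, _⟩
        · right; exact h1
        · left; exact h1
    refine ⟨β, ?_, ?_⟩
    · intro n
      rw [show pre β n = Vnode ρ n from pre_Vnode ρ n]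
      exact g_true hδ hacc (inv n)
    · intro m
      obtain ⟨r, hre, hio, hmax⟩ := hacc β
      have grank : ∀ n, rankB (ρ (pre β n)) = 1 ∨ rankB (ρ (pre β n)) = 2 := by
        intro n
        rw [pre_Vnode ρ n]
        rcases inv n with h' | h' <;> rw [h'] <;> simp [rankB]
      have hr2 : r = 2 := by
        obtain ⟨n, -, hgn⟩ := hio 0
        change rankB (ρ (pre β n)) = r at hgn
        rcases grank n with h' | h' <;> rw [h'] at hgn
        · exfalso; rw [← hgn] at hre; simp [Nat.even_iff] at hre
        · omega
      subst hr2
      obtain ⟨n, hn, hgn⟩ := hio (m + 1)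
      change rankB (ρ (pre β n)) = 2 at hgn
      obtain ⟨k, rfl⟩ : ∃ k, n = k + 1 := ⟨n - 1, by omega⟩
      have hg2 : ρ (Vnode ρ (k+1)) = .g2 := by
        rw [pre_Vnode ρ (k+1)] at hgn
        rcases inv (k+1) with h' | h'
        · rw [h'] at hgn; simp [rankB] at hgn
        · exact h'
      refine ⟨k, by omega, ?_⟩
      rcases stepCase k (inv k) with ⟨-, hs⟩ | ⟨h1, -⟩
      · exact hs
      · rw [h1] at hg2; cases hg2
  · rintro ⟨β, hgood⟩
    refine ⟨runOf β, ⟨⟨by simp [runOf, pre], ?_⟩, ?_⟩⟩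
    · intro v
      by_cases hv : v = pre β v.length
      · have ht : t v = true := by rw [hv]; exact hgood.1 v.length
        have hq : runOf β v = .g1 ∨ runOf β v = .g2 := by
          unfold runOf
          rw [if_pos hv]
          split <;> [left; skip] <;> [rfl; split] <;> [right; left] <;> rfl
        have child : ∀ x : Fin 2, runOf β (v ++ [x]) =
            (if x = β v.length then (if (β v.length : Fin 2) = 0 then QB.g2 else QB.g1)
             else QB.top2) := by
          intro x
          by_cases hx : x = β v.length
          · have hon : v ++ [x] = pre β (v ++ [x]).length := by
              rw [List.length_append, List.length_singleton]
              exact (append_eq_pre_iff β v x).mpr ⟨hv, hx⟩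
            unfold runOf
            rw [if_pos hon, if_pos hx]
            simp
          · have hoff : ¬ (v ++ [x] = pre β (v ++ [x]).length) := by
              rw [List.length_append, List.length_singleton]
              intro h
              exact hx ((append_eq_pre_iff β v x).mp h).2
            unfold runOf
            rw [if_neg hoff, if_neg hx]
        rw [ht]
        rcases fin2cases (β v.length) with hb | hb
        · have c0 := child 0
          have c1 := child 1
          rw [hb] at c0 c1
          simp at c0 c1
          have hd : runOf β (v ++ [0]) = .g2 ∧ runOf β (v ++ [1]) = .top2 := by
            constructor
            · rw [c0]
            · rw [c1]
          rcases hq with h' | h' <;> rw [h'] <;> exact Or.inl hd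
        · have c0 := child 0
          have c1 := child 1
          rw [hb] at c0 c1
          simp at c0 c1
          have hd : runOf β (v ++ [0]) = .top2 ∧ runOf β (v ++ [1]) = .g1 := by
            constructor
            · rw [c0]
            · rw [c1]
          rcases hq with h' | h' <;> rw [h'] <;> exact Or.inr hd
      · have hvoff : runOf β v = .top2 := by unfold runOf; rw [if_neg hv]
        have child : ∀ x : Fin 2, runOf β (v ++ [x]) = .top2 := by
          intro x
          have hoff : ¬ (v ++ [x] = pre β (v ++ [x]).length) := by
            rw [List.length_append, List.length_singleton]
            intro h
            exact hv ((append_eq_pre_iff β v x).mp h).1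
          unfold runOf
          rw [if_neg hoff]
        rw [hvoff]
        cases t v <;> exact ⟨child 0, child 1⟩
    · intro γ
      refine ⟨2, by norm_num, ?_, ?_⟩
      · intro m
        by_cases hall : ∀ n, pre γ n = pre β n
        · obtain ⟨k, hk, hk0⟩ := hgood.2 m
          refine ⟨k + 1, by omega, ?_⟩
          have : runOf β (pre γ (k+1)) = .g2 := by
            rw [hall (k+1)]
            unfold runOf
            rw [if_pos (by rw [pre_length])]
            rw [pre_length]
            simp [hk0]
          simp [this, rankB]
        · push_neg at hall
          obtain ⟨n0, hn0⟩ := hall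
          refine ⟨max m n0, le_max_left _ _, ?_⟩
          have hne : pre γ (max m n0) ≠ pre β (max m n0) := by
            intro h
            apply hn0
            rw [← pre_take γ (le_max_right m n0), h, pre_take β (le_max_right m n0)]
          have : runOf β (pre γ (max m n0)) = .top2 := by
            unfold runOf
            rw [if_neg (by rw [pre_length]; exact hne)]
          simp [this, rankB]
      · intro r' hr'
        obtain ⟨n, -, hgn⟩ := hr' 0
        rw [← hgn]
        exact rankB_le_two _
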